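/- If there is a reachable assignment σ (via rational swaps on a path) with σ(k) = o_1 and σ(k-1) = o_{n'}, then n' ≥ k. -/

import Mathlib

/-- An assignment maps agents to objects bijectively (agents and objects are both `Fin n`;
object `o_i` is identified with index `i`, agent `i` initially holds `o_i`). -/
abbrev Assignment (n : ℕ) := Equiv.Perm (Fin n)

/-- `u j o` is agent `j`'s utility for object `o`; strict linear preferences mean each `u j`
is injective, and `o ≻_j o'` iff `u j o > u j o'`. -/
def StrictPref {n : ℕ} (u : Fin n → Fin n → ℕ) : Prop := ∀ j, Function.Injective (u j)

/-- A rational swap under strict preferences: two adjacent agents exchange objects, each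
strictly preferring the object received. -/
def SwapStep {n : ℕ} (adj : Fin n → Fin n → Prop) (u : Fin n → Fin n → ℕ)
    (σ σ' : Assignment n) : Prop :=
  ∃ a b : Fin n, adj a b ∧ u a (σ b) > u a (σ a) ∧ u b (σ a) > u b (σ b) ∧
    σ' = σ * Equiv.swap a b

/-- `σseq 0, σseq 1, …, σseq t` is a sequence of swaps. -/
def SwapSeq {n : ℕ} (adj : Fin n → Fin n → Prop) (u : Fin n → Fin n → ℕ)
    (σseq : ℕ → Assignment n) (t : ℕ) : Prop :=
  ∀ m < t, SwapStep adj u (σseq m) (σseq (m + 1))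

/-- Adjacency of the path `0 – 1 – ⋯ – (n-1)`. -/
def pathAdj {n : ℕ} (i j : Fin n) : Prop := i.val + 1 = j.val ∨ j.val + 1 = i.val

/-- `σ` is reachable from the identity endowment via rational swaps. -/
def ReachableAssign {n : ℕ} (adj : Fin n → Fin n → Prop) (u : Fin n → Fin n → ℕ)
    (σ : Assignment n) : Prop :=
  ∃ t σseq, σseq 0 = 1 ∧ SwapSeq adj u σseq t ∧ σseq t = σ

/-- Discrete IVT for sequences with upward steps of size at most 1. -/
lemma ivt_nat (f : ℕ → ℕ) (s v : ℕ) :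
    ∀ t, s ≤ t → (∀ m, m < t → f (m+1) ≤ f m + 1) → f s ≤ v → v ≤ f t →
    ∃ m, s ≤ m ∧ m ≤ t ∧ f m = v := by
  intro t
  induction t with
  | zero =>
    intro hs _ h1 h2
    have hs0 : s = 0 := by omega
    subst hs0
    exact ⟨0, le_refl 0, le_refl 0, by omega⟩
  | succ t ih =>
    intro hs hstep h1 h2
    by_cases hv : v ≤ f t
    · by_cases hst : s ≤ t
      · obtain ⟨m, hm1, hm2, hm3⟩ := ih hst (fun m hm => hstep m (by omega)) h1 hv
        exact ⟨m, hm1, by omega, hm3⟩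
      · have hse : s = t + 1 := by omega
        subst hse
        exact ⟨t+1, le_refl _, le_refl _, by omega⟩
    · have := hstep t (by omega)
      exact ⟨t+1, by omega, le_refl _, by omega⟩

/-- An integer sequence with steps of size ≤ 1 that never revisits a value after leaving it,
and whose final value is at least its initial value, never moves down. -/
lemma never_left (f : ℕ → ℕ) (T : ℕ)
    (hstep : ∀ m, m < T → f (m+1) ≤ f m + 1 ∧ f m ≤ f (m+1) + 1)
    (hR : ∀ t s t', t ≤ s → s ≤ t' → t' ≤ T → f t = f t' → f s = f t)
    (h0T : f 0 ≤ f T) : ∀ t, t < T → f t ≤ f (t+1) := by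
  intro t ht
  by_contra hlt
  push_neg at hlt
  have hs := hstep t ht
  by_cases hc : f 0 ≤ f t - 1
  · obtain ⟨m, hm1, hm2, hm3⟩ := ivt_nat f 0 (f t - 1) t (Nat.zero_le _)
      (fun m hm => (hstep m (by omega)).1) hc (by omega)
    have := hR m t (t+1) hm2 (by omega) (by omega) (by omega)
    omega
  · obtain ⟨m, hm1, hm2, hm3⟩ := ivt_nat f (t+1) (f t) T (by omega)
      (fun m hm => (hstep m hm).1) (by omega) (by omega)
    have := hR t (t+1) m (by omega) hm1 hm2 (by omega)
    omega

/-- STATEMENT 8 (0-indexed: object `o_1` is index `0`; agent `k` 1-indexed with `k ≥ 2`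
becomes `k : Fin n` with `k.val ≥ 1`; the conclusion `n' ≥ k` becomes: the 0-indexed index of
the object held by agent `k-1` is at least `k.val`): if a reachable assignment `σ` on a path
has `σ(k) = o_1` and `σ(k-1) = o_{n'}`, then `n' ≥ k`. -/
theorem end_object_index_ge {n : ℕ} (hn : 0 < n)
    (u : Fin n → Fin n → ℕ) (hu : StrictPref u)
    (k : Fin n) (hk : 1 ≤ k.val)
    (σ : Assignment n) (hreach : ReachableAssign pathAdj u σ)
    (h1 : σ k = ⟨0, hn⟩) :
    k.val ≤ (σ ⟨k.val - 1, by omega⟩).val := by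
  obtain ⟨T, σs, h0, hseq, hTend⟩ := hreach
  by_contra hcon
  push_neg at hcon
  set km : Fin n := ⟨k.val - 1, by omega⟩ with hkm
  set y : Fin n := σ km with hy
  have hkmk : km ≠ k := by
    intro h
    have := congrArg Fin.val h
    simp [hkm] at this
    omega
  have hy0 : y ≠ ⟨0, hn⟩ := by
    intro h
    exact hkmk (σ.injective (h.trans h1.symm))
  -- utility of each agent is nondecreasing along the sequence
  have humono : ∀ c : Fin n, ∀ m, m < T → u c (σs m c) ≤ u c (σs (m+1) c) := by
    intro c m hm
    obtain ⟨a, b, hab, hua, hub, heq⟩ := hseq m hm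
    rw [heq]
    simp only [Equiv.Perm.mul_apply]
    rcases eq_or_ne c a with rfl | hca
    · rw [Equiv.swap_apply_left]; exact le_of_lt hua
    rcases eq_or_ne c b with rfl | hcb
    · rw [Equiv.swap_apply_right]; exact le_of_lt hub
    · rw [Equiv.swap_apply_of_ne_of_ne hca hcb]
  have humono' : ∀ c : Fin n, ∀ s s', s ≤ s' → s' ≤ T → u c (σs s c) ≤ u c (σs s' c) := by
    intro c s s' hss' hs'T
    induction s', hss' using Nat.le_induction with
    | base => exact le_refl _
    | succ m hm ih => exact le_trans (ih (by omega)) (humono c m (by omega))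
  -- if an agent holds the same object at two times, it holds it in between
  have hconst : ∀ c : Fin n, ∀ t s t', t ≤ s → s ≤ t' → t' ≤ T → σs t c = σs t' c →
      σs s c = σs t c := by
    intro c t s t' h1' h2' h3' h4'
    have hu1 := humono' c t s h1' (by omega)
    have hu2 := humono' c s t' h2' h3'
    have : u c (σs s c) = u c (σs t c) := by rw [h4'] at hu1 ⊢; omega
    exact hu c this
  -- no-revisit property for object positions
  have hRgen : ∀ (o : Fin n), ∀ t s t', t ≤ s → s ≤ t' → t' ≤ T →
      ((σs t)⁻¹ o).val = ((σs t')⁻¹ o).val →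
      ((σs s)⁻¹ o).val = ((σs t)⁻¹ o).val := by
    intro o t s t' h1' h2' h3' h4'
    have heq : (σs t')⁻¹ o = (σs t)⁻¹ o := Fin.val_injective h4'.symm
    set a : Fin n := (σs t)⁻¹ o with ha
    have hta : σs t a = o := Equiv.apply_symm_apply _ _
    have ht'a : σs t' a = o := by rw [← heq]; exact Equiv.apply_symm_apply _ _
    have hsa : σs s a = o := by rw [hconst a t s t' h1' h2' h3' (hta.trans ht'a.symm)]; exact hta
    have : (σs s)⁻¹ o = a := by rw [← hsa]; exact Equiv.symm_apply_apply _ _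
    rw [this]
  -- step bound for object positions
  have hstep : ∀ (o : Fin n), ∀ m, m < T →
      ((σs (m+1))⁻¹ o).val ≤ ((σs m)⁻¹ o).val + 1 ∧
      ((σs m)⁻¹ o).val ≤ ((σs (m+1))⁻¹ o).val + 1 := by
    intro o m hm
    obtain ⟨a, b, hab, hua, hub, heq⟩ := hseq m hm
    have hinv : (σs (m+1))⁻¹ o = Equiv.swap a b ((σs m)⁻¹ o) := by
      rw [heq, mul_inv_rev, Equiv.swap_inv, Equiv.Perm.mul_apply]
    rw [hinv]
    rcases hab with hab | hab <;>
    · rcases eq_or_ne ((σs m)⁻¹ o) a with he | he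
      · rw [he, Equiv.swap_apply_left]; omega
      rcases eq_or_ne ((σs m)⁻¹ o) b with he2 | he2
      · rw [he2, Equiv.swap_apply_right]; omega
      · rw [Equiv.swap_apply_of_ne_of_ne he he2]; omega
  -- positions of object 0 and object y
  set p : ℕ → ℕ := fun t => ((σs t)⁻¹ (⟨0, hn⟩ : Fin n)).val with hp
  set q : ℕ → ℕ := fun t => ((σs t)⁻¹ y).val with hq
  have hp0 : p 0 = 0 := by simp [hp, h0, Equiv.Perm.one_symm]
  have hq0 : q 0 = y.val := by simp [hq, h0, Equiv.Perm.one_symm]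
  have hpT : p T = k.val := by
    have : (σs T)⁻¹ (⟨0, hn⟩ : Fin n) = k := by
      rw [hTend, ← h1]; exact Equiv.symm_apply_apply _ _
    simp only [hp, this]
  have hqT : q T = k.val - 1 := by
    have : (σs T)⁻¹ y = km := by
      rw [hTend, hy]; exact Equiv.symm_apply_apply _ _
    simp only [hq, this]; simp [hkm]
  have hpNL : ∀ t, t < T → p t ≤ p (t+1) :=
    never_left p T (fun m hm => hstep _ m hm) (fun t s t' => hRgen _ t s t') (by omega)
  have hqNL : ∀ t, t < T → q t ≤ q (t+1) :=
    never_left q T (fun m hm => hstep _ m hm) (fun t s t' => hRgen _ t s t') (by omega)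
  have hne : ∀ t, p t ≠ q t := by
    intro t h
    exact hy0 ((σs t)⁻¹.injective (Fin.val_injective h)).symm
  -- the position of object 0 stays strictly left of the position of object y
  have hpq : ∀ t, t ≤ T → p t < q t := by
    intro t
    induction t with
    | zero =>
      intro _
      have : y.val ≠ 0 := by
        intro h; exact hy0 (Fin.val_injective (by simpa using h))
      omega
    | succ t ih =>
      intro hT1
      have ht : t < T := by omega
      have h1p := (hstep (⟨0, hn⟩ : Fin n) t ht).1
      have h2q := hqNL t ht
      have h3 := ih (by omega)
      have h4 := hne (t+1)
      simp only [hp, hq] at *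
      omega
  have := hpq T (le_refl T)
  omega
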